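/- There exists an absolute constant C such that for every n-vertex unweighted undirected graph G = (V,E), every real 0 < ε < 1, and every integer t ≥ 2, there exists a weighted edge set H on V with at most C·n^{3/2}·log n edges which is a (β, ε, t)-hopset of G, where β = ⌈C·(log t)/ε⌉. -/

import Mathlib

open scoped ENNReal

/-- The total weight of the walk that starts at `u` and successively visits the vertices of
`l`, where `step x y` is the cost of traversing the edge `{x,y}` (`∞` if there is none). -/
noncomputable def walkCost {V : Type*} (step : V → V → ℝ≥0∞) : V → List V → ℝ≥0∞
  | _, [] => 0
  | u, x :: l => step u x + walkCost step x l

/-- The `β`-hop-bounded weighted distance from `u` to `v`: the infimum total cost over walks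
from `u` to `v` using at most `β` edges (`∞` if there is no such walk). -/
noncomputable def bddWDist {V : Type*} (step : V → V → ℝ≥0∞) (β : ℕ) (u v : V) : ℝ≥0∞ :=
  ⨅ (l : List V) (_ : l.length ≤ β)
    (_ : (u :: l).getLast (List.cons_ne_nil u l) = v), walkCost step u l

open Classical in
/-- The cost of a single step in `G ∪ H`: an edge of `G` has weight `1`, and an edge of the
weighted edge set `H` (described by `w`, with `w u v = ∞` meaning no edge) has weight `w u v`;
the cheaper option is taken. -/
noncomputable def stepCost {V : Type*} (G : SimpleGraph V) (w : V → V → ℝ≥0∞) (u v : V) :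
    ℝ≥0∞ :=
  min (if G.Adj u v then 1 else ⊤) (w u v)

@[simp] lemma walkCost_nil {V : Type*} (step : V → V → ℝ≥0∞) (u : V) :
    walkCost step u [] = 0 := rfl

@[simp] lemma walkCost_cons {V : Type*} (step : V → V → ℝ≥0∞) (u x : V) (l : List V) :
    walkCost step u (x :: l) = step u x + walkCost step x l := rfl

lemma bddWDist_le {V : Type*} (step : V → V → ℝ≥0∞) (β : ℕ) (u v : V) (l : List V)
    (h1 : l.length ≤ β) (h2 : (u :: l).getLast (List.cons_ne_nil u l) = v) :
    bddWDist step β u v ≤ walkCost step u l := by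
  refine le_trans (iInf_le _ l) ?_
  exact le_trans (iInf_le _ h1) (iInf_le _ h2)

/-- From a graph walk, a hop list whose cost is at most its length. -/
lemma exists_list_of_walk {V : Type*} (G : SimpleGraph V) (w : V → V → ℝ≥0∞) :
    ∀ {a b : V} (p : G.Walk a b), ∃ l : List V, l.length = p.length ∧
      (a :: l).getLast (List.cons_ne_nil a l) = b ∧
      walkCost (stepCost G w) a l ≤ (p.length : ℝ≥0∞) := by
  intro a b p
  induction p with
  | nil => exact ⟨[], rfl, rfl, by simp⟩
  | @cons u x b h q ih =>
      obtain ⟨l, hlen, hlast, hcost⟩ := ih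
      refine ⟨x :: l, by simpa using hlen, ?_, ?_⟩
      · rw [List.getLast_cons (List.cons_ne_nil x l)]
        exact hlast
      · rw [walkCost_cons]
        have hstep : stepCost G w u x ≤ 1 := by
          rw [stepCost]
          exact le_trans (min_le_left _ _) (by simp [h])
        calc stepCost G w u x + walkCost (stepCost G w) x l ≤ 1 + (q.length : ℝ≥0∞) := by
              exact add_le_add hstep hcost
        _ = ((q.length + 1 : ℕ) : ℝ≥0∞) := by push_cast; ring
        _ = _ := by simp [SimpleGraph.Walk.length_cons]


open Finset in
lemma hitting_lemma {α : Type*} [DecidableEq α] (U : Finset α) (m : ℕ) (hm : 0 < m) :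
    ∀ N (F : Finset (Finset α)), F.card ≤ N → (∀ A ∈ F, A ⊆ U ∧ m ≤ A.card) →
    ∃ S : Finset α, S ⊆ U ∧ (∀ A ∈ F, ∃ x ∈ S, x ∈ A) ∧
      ((S.card : ℝ) ≤ ((U.card : ℝ) / m) * Real.log F.card + 1) ∧ (F = ∅ → S = ∅) := by
  intro N
  induction N with
  | zero =>
      intro F hF _
      have : F = ∅ := Finset.card_eq_zero.mp (Nat.le_zero.mp hF)
      subst this
      exact ⟨∅, by simp, by simp, by norm_num, fun _ => rfl⟩
  | succ N ih =>
      intro F hFN hF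
      rcases eq_or_ne F ∅ with rfl | hFne
      · exact ⟨∅, by simp, by simp, by norm_num, fun _ => rfl⟩
      have hFpos : 0 < F.card := Finset.card_pos.mpr (Finset.nonempty_iff_ne_empty.mpr hFne)
      obtain ⟨A₀, hA₀⟩ := Finset.nonempty_iff_ne_empty.mpr hFne
      have hmU : m ≤ U.card := le_trans (hF A₀ hA₀).2 (Finset.card_le_card (hF A₀ hA₀).1)
      have hUpos : 0 < U.card := lt_of_lt_of_le hm hmU
      -- double counting
      have hdouble : F.card * m ≤ ∑ x ∈ U, (F.filter (fun A => x ∈ A)).card := by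
        calc F.card * m = ∑ _A ∈ F, m := by rw [Finset.sum_const, smul_eq_mul]
        _ ≤ ∑ A ∈ F, A.card := Finset.sum_le_sum (fun A hA => (hF A hA).2)
        _ = ∑ A ∈ F, (U.filter (fun x => x ∈ A)).card := by
              refine Finset.sum_congr rfl fun A hA => ?_
              rw [Finset.filter_mem_eq_inter, Finset.inter_eq_right.mpr (hF A hA).1]
        _ = ∑ A ∈ F, ∑ x ∈ U, (if x ∈ A then 1 else 0) := by
              refine Finset.sum_congr rfl fun A _ => ?_
              rw [Finset.card_filter]
        _ = ∑ x ∈ U, ∑ A ∈ F, (if x ∈ A then 1 else 0) := Finset.sum_comm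
        _ = ∑ x ∈ U, (F.filter (fun A => x ∈ A)).card := by
              refine Finset.sum_congr rfl fun x _ => ?_
              rw [Finset.card_filter]
      -- pigeonhole
      have hx : ∃ x ∈ U, F.card * m ≤ U.card * (F.filter (fun A => x ∈ A)).card := by
        by_contra h
        push_neg at h
        have hlt : ∑ x ∈ U, U.card * (F.filter (fun A => x ∈ A)).card
            < ∑ _x ∈ U, F.card * m := by
          apply Finset.sum_lt_sum_of_nonempty (Finset.card_pos.mp hUpos)
          intro x hxU; exact h x hxU
        rw [Finset.sum_const, smul_eq_mul] at hlt
        have h1 : U.card * (F.card * m) ≤ U.card * ∑ x ∈ U, (F.filter (fun A => x ∈ A)).card :=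
          Nat.mul_le_mul_left _ hdouble
        rw [Finset.mul_sum] at h1
        exact absurd (h1.trans_lt hlt) (lt_irrefl _)
      obtain ⟨x, hxU, hxhit⟩ := hx
      set deg := (F.filter (fun A => x ∈ A)).card with hdeg
      have hdegpos : 0 < deg := by
        have h0 : 0 < U.card * deg := lt_of_lt_of_le (Nat.mul_pos hFpos hm) hxhit
        exact Nat.pos_of_ne_zero fun h => by simp [h] at h0
      set F' := F.filter (fun A => x ∉ A) with hF'
      have hF'card : F'.card = F.card - deg := by
        rw [hF', hdeg, Finset.filter_not, Finset.card_sdiff_of_subset (Finset.filter_subset _ _)]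
      have hdegle : deg ≤ F.card := by rw [hdeg]; exact Finset.card_le_card (Finset.filter_subset _ _)
      have hF'lt : F'.card < F.card := by omega
      obtain ⟨S', hS'U, hS'hit, hS'card, hS'emp⟩ := ih F' (by omega)
        (fun A hA => hF A (Finset.filter_subset _ _ hA))
      refine ⟨insert x S', Finset.insert_subset hxU hS'U, ?_, ?_, fun h => absurd h hFne⟩
      · intro A hA
        by_cases hxA : x ∈ A
        · exact ⟨x, Finset.mem_insert_self _ _, hxA⟩
        · obtain ⟨y, hy1, hy2⟩ := hS'hit A (Finset.mem_filter.mpr ⟨hA, hxA⟩)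
          exact ⟨y, Finset.mem_insert_of_mem hy1, hy2⟩
      · have hins : ((insert x S').card : ℝ) ≤ (S'.card : ℝ) + 1 := by
          exact_mod_cast Finset.card_insert_le _ _
        rcases eq_or_ne F' ∅ with hemp | hne'
        · rw [hS'emp hemp] at hins ⊢
          simp only [Finset.card_empty, Nat.cast_zero, zero_add] at hins
          refine le_trans hins ?_
          have h1 : (0:ℝ) ≤ ((U.card : ℝ) / m) * Real.log F.card := by
            apply mul_nonneg (by positivity)
            apply Real.log_nonneg; exact_mod_cast hFpos
          linarith
        · have hF'pos : 0 < F'.card := Finset.card_pos.mpr (Finset.nonempty_iff_ne_empty.mpr hne')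
          have hkey : (F'.card : ℝ) ≤ (F.card : ℝ) * (1 - (m : ℝ) / U.card) := by
            have h1 : ((F.card : ℝ)) * m ≤ (U.card : ℝ) * deg := by exact_mod_cast hxhit
            have h2 : (F'.card : ℝ) = (F.card : ℝ) - deg := by
              rw [hF'card, Nat.cast_sub hdegle]
            have hU : (0:ℝ) < U.card := by exact_mod_cast hUpos
            rw [h2, mul_sub, mul_one]
            have h3 : (F.card : ℝ) * ((m:ℝ) / U.card) ≤ (deg : ℝ) := by
              rw [← mul_div_assoc, div_le_iff₀ hU]
              nlinarith
            linarith
          have hF'r : (0:ℝ) < F'.card := by exact_mod_cast hF'pos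
          have hfrac : (0:ℝ) < 1 - (m:ℝ)/U.card := by
            have hFr : (0:ℝ) < F.card := by exact_mod_cast hFpos
            nlinarith
          have hlog : Real.log F'.card ≤ Real.log F.card - (m : ℝ) / U.card := by
            calc Real.log F'.card ≤ Real.log ((F.card : ℝ) * (1 - (m:ℝ)/U.card)) :=
                  Real.log_le_log hF'r hkey
            _ = Real.log F.card + Real.log (1 - (m:ℝ)/U.card) := by
                  rw [Real.log_mul (by positivity) (ne_of_gt hfrac)]
            _ ≤ Real.log F.card + ((1 - (m:ℝ)/U.card) - 1) := by
                  have := Real.log_le_sub_one_of_pos hfrac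
                  linarith
            _ = Real.log F.card - (m:ℝ)/U.card := by ring
          have hUm : ((U.card : ℝ)/m) * ((m:ℝ)/U.card) = 1 := by
            have h1 : (0:ℝ) < m := by exact_mod_cast hm
            have h2 : (0:ℝ) < U.card := by exact_mod_cast hUpos
            field_simp
          have hnn : (0:ℝ) ≤ (U.card:ℝ)/m := by positivity
          calc ((insert x S').card : ℝ) ≤ (S'.card : ℝ) + 1 := hins
          _ ≤ ((U.card:ℝ)/m) * Real.log F'.card + 1 + 1 := by linarith
          _ ≤ ((U.card:ℝ)/m) * (Real.log F.card - (m:ℝ)/U.card) + 2 := by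
                nlinarith [mul_le_mul_of_nonneg_left hlog hnn]
          _ ≤ ((U.card:ℝ)/m) * Real.log F.card + 1 := by
                rw [mul_sub, hUm]; linarith


lemma dist_triangle' {V : Type*} {G : SimpleGraph V} {u v x : V}
    (h1 : G.Reachable u x) (h2 : G.Reachable x v) :
    G.dist u v ≤ G.dist u x + G.dist x v := by
  obtain ⟨p, hp⟩ := h1.exists_walk_length_eq_dist
  obtain ⟨q, hq⟩ := h2.exists_walk_length_eq_dist
  calc G.dist u v ≤ (p.append q).length := SimpleGraph.dist_le _
  _ = G.dist u x + G.dist x v := by rw [SimpleGraph.Walk.length_append, hp, hq]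

/-- vertex at prescribed distance on a geodesic -/
lemma exists_mid {V : Type*} {G : SimpleGraph V} {x v : V} (h : G.Reachable x v) :
    ∀ r : ℕ, r ≤ G.dist x v →
    ∃ y, G.Reachable x y ∧ G.Reachable y v ∧ G.dist x y = r ∧ G.dist y v = G.dist x v - r := by
  intro r
  induction r with
  | zero => exact fun _ => ⟨x, .refl x, h, by simp [SimpleGraph.dist_self], by simp⟩
  | succ r ih =>
      intro hr
      obtain ⟨y, hxy, hyv, hd1, hd2⟩ := ih (by omega)
      have hyvpos : 0 < G.dist y v := by omega
      -- a neighbor of y closer to v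
      obtain ⟨p, hp⟩ := hyv.exists_walk_length_eq_dist
      have hpne : ¬ p.Nil := by
        intro hnil
        rw [SimpleGraph.Walk.nil_iff_length_eq.mp hnil] at hp
        omega
      obtain ⟨z, hadj, q, hq⟩ : ∃ z, ∃ (hadj : G.Adj y z), ∃ (q : G.Walk z v),
          p = SimpleGraph.Walk.cons hadj q := by
        cases p with
        | nil => exact absurd SimpleGraph.Walk.Nil.nil hpne
        | cons hadj q => exact ⟨_, hadj, q, rfl⟩
      have hqlen : q.length = G.dist y v - 1 := by
        rw [hq] at hp
        simp [SimpleGraph.Walk.length_cons] at hp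
        omega
      have hzv : G.Reachable z v := ⟨q⟩
      have hdzv : G.dist z v = G.dist y v - 1 := by
        have h1 : G.dist z v ≤ G.dist y v - 1 := hqlen ▸ SimpleGraph.dist_le q
        have h2 : G.dist y v ≤ 1 + G.dist z v := by
          calc G.dist y v ≤ G.dist y z + G.dist z v := dist_triangle' hadj.reachable hzv
          _ ≤ 1 + G.dist z v := by
                have : G.dist y z ≤ 1 := by
                  have := SimpleGraph.dist_le hadj.toWalk
                  simpa using this
                omega
        omega
      have hxz : G.Reachable x z := hxy.trans hadj.reachable
      refine ⟨z, hxz, hzv, ?_, by omega⟩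
      have h1 : G.dist x z ≤ r + 1 := by
        calc G.dist x z ≤ G.dist x y + G.dist y z := dist_triangle' hxy hadj.reachable
        _ ≤ r + 1 := by
              have : G.dist y z ≤ 1 := by simpa using SimpleGraph.dist_le hadj.toWalk
              omega
      have h2 : G.dist x v ≤ G.dist x z + G.dist z v := dist_triangle' hxz hzv
      omega

/-- lower bound on walk cost -/
lemma walkCost_ge {V : Type*} (G : SimpleGraph V) (step : V → V → ℝ≥0∞)
    (hstep : ∀ a b : V, step a b ≠ ⊤ → G.Reachable a b ∧ (G.dist a b : ℝ≥0∞) ≤ step a b) :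
    ∀ (l : List V) (a : V), walkCost step a l ≠ ⊤ →
      G.Reachable a ((a :: l).getLast (List.cons_ne_nil a l)) ∧
      ((G.dist a ((a :: l).getLast (List.cons_ne_nil a l)) : ℝ≥0∞)) ≤ walkCost step a l := by
  intro l
  induction l with
  | nil => intro a _; exact ⟨SimpleGraph.Reachable.refl a, by simp [SimpleGraph.dist_self, walkCost]⟩
  | cons x l ih =>
      intro a hne
      have hcost : walkCost step a (x :: l) = step a x + walkCost step x l := rfl
      rw [hcost] at hne ⊢
      have hs : step a x ≠ ⊤ := fun h => hne (by simp [h])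
      have hr : walkCost step x l ≠ ⊤ := fun h => hne (by simp [h])
      obtain ⟨hreach1, hle1⟩ := hstep a x hs
      obtain ⟨hreach2, hle2⟩ := ih x hr
      have hlast : ((a :: x :: l).getLast (List.cons_ne_nil a (x :: l)))
          = ((x :: l).getLast (List.cons_ne_nil x l)) := List.getLast_cons _
      rw [hlast]
      set b := (x :: l).getLast (List.cons_ne_nil x l)
      refine ⟨hreach1.trans hreach2, ?_⟩
      calc ((G.dist a b : ℝ≥0∞)) ≤ ((G.dist a x + G.dist x b : ℕ) : ℝ≥0∞) := by
            exact_mod_cast Nat.cast_le.mpr (dist_triangle' hreach1 hreach2)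
      _ = (G.dist a x : ℝ≥0∞) + (G.dist x b : ℝ≥0∞) := by push_cast; rfl
      _ ≤ step a x + walkCost step x l := add_le_add hle1 hle2

set_option maxHeartbeats 1000000 in
/-- There is an absolute constant `C` such that for every `n`-vertex
unweighted undirected graph `G`, every `0 < ε < 1`, and every integer `t ≥ 2`, there is a
weighted edge set `H` on `V` (symmetric positive weights `w`) with at most
`C·n^(3/2)·log n` edges (counted as ordered pairs) which is a `(β, ε, t)`-hopset of `G`
for `β = ⌈C·(log t)/ε⌉`: for all `u, v` with `d_G(u,v) ≤ t`,
`d_G(u,v) ≤ d^β_{G∪H}(u,v) ≤ (1+ε)·d_G(u,v)`. -/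
theorem bounded_hopset_exists :
    ∃ C : ℝ, 0 < C ∧
      ∀ (V : Type) [Fintype V] (G : SimpleGraph V) (ε : ℝ) (t : ℕ),
        0 < ε → ε < 1 → 2 ≤ t →
        ∃ w : V → V → ℝ≥0∞,
          (∀ u v, w u v = w v u) ∧ (∀ u v, 0 < w u v) ∧
          (({p : V × V | w p.1 p.2 ≠ ⊤}).ncard : ℝ) ≤
            C * (Fintype.card V : ℝ) ^ ((3 : ℝ) / 2) * Real.log (Fintype.card V) ∧
          ∀ u v : V, G.Reachable u v → G.dist u v ≤ t →
            (G.dist u v : ℝ≥0∞) ≤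
                bddWDist (stepCost G w) ⌈C * Real.log t / ε⌉₊ u v ∧
              bddWDist (stepCost G w) ⌈C * Real.log t / ε⌉₊ u v ≤
                ENNReal.ofReal (1 + ε) * (G.dist u v : ℝ≥0∞) := by
  classical
  refine ⟨10000, by norm_num, ?_⟩
  intro V _ G ε t hε hε1 ht
  set n := Fintype.card V with hn
  by_cases hn1 : n ≤ 1
  · -- degenerate case
    refine ⟨fun _ _ => ⊤, fun _ _ => rfl, fun _ _ => ENNReal.zero_lt_top, ?_, ?_⟩
    · have hempty : {p : V × V | (⊤ : ℝ≥0∞) ≠ ⊤} = ∅ := by simp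
      rw [hempty]
      simp only [Set.ncard_empty, Nat.cast_zero]
      interval_cases n <;> norm_num
    · intro u v hr hd
      have hsub : Subsingleton V := Fintype.card_le_one_iff_subsingleton.mp hn1
      have huv : u = v := Subsingleton.elim u v
      subst huv
      rw [SimpleGraph.dist_self]
      constructor
      · simp
      · have h0 : bddWDist (stepCost G fun _ _ => (⊤:ℝ≥0∞)) ⌈(10000:ℝ) * Real.log t / ε⌉₊ u u
            ≤ walkCost (stepCost G fun _ _ => (⊤:ℝ≥0∞)) u [] :=
          bddWDist_le _ _ _ _ [] (by simp) (by simp)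
        simpa [walkCost] using h0
  push_neg at hn1
  have hn2 : 2 ≤ n := hn1
  -- ============ the construction ============
  set τ := Nat.sqrt n with hτdef
  set Jmax := Nat.log 2 n with hJdef
  set Ball : V → ℕ → Finset V :=
    (fun x r => Finset.univ.filter (fun y => G.Reachable x y ∧ G.dist x y ≤ r)) with hBall
  set Dns : V → ℕ → Prop := (fun x j => τ < (Ball x (2^j)).card) with hDns
  set Fam : Finset (Finset V) :=
    ((Finset.univ ×ˢ Finset.range (Jmax+1)).filter (fun p : V × ℕ => Dns p.1 p.2)).image
      (fun p => Ball p.1 (2^p.2)) with hFam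
  have hfamcond : ∀ A ∈ Fam, A ⊆ Finset.univ ∧ τ + 1 ≤ A.card := by
    intro A hA
    rw [hFam] at hA
    obtain ⟨p, hp, rfl⟩ := Finset.mem_image.mp hA
    exact ⟨Finset.subset_univ _, (Finset.mem_filter.mp hp).2⟩
  obtain ⟨S, hSU, hShit, hScard, -⟩ :=
    hitting_lemma Finset.univ (τ+1) τ.succ_pos Fam.card Fam le_rfl hfamcond
  set Supp : V → V → Prop := (fun a b => a ≠ b ∧ G.Reachable a b ∧
    (b ∈ S ∨ a ∈ S ∨ (∃ j ≤ Jmax, ¬ Dns a j ∧ b ∈ Ball a (2^j)) ∨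
      (∃ j ≤ Jmax, ¬ Dns b j ∧ a ∈ Ball b (2^j)))) with hSupp
  set w : V → V → ℝ≥0∞ := (fun a b => if Supp a b then (G.dist a b : ℝ≥0∞) else ⊤) with hw
  have hwSupp : ∀ a b, Supp a b → w a b = (G.dist a b : ℝ≥0∞) := by
    intro a b h; rw [hw]; exact if_pos h
  have hwNot : ∀ a b, ¬ Supp a b → w a b = ⊤ := by
    intro a b h; rw [hw]; exact if_neg h
  have hSuppSymm : ∀ a b, Supp a b → Supp b a := by
    intro a b h
    obtain ⟨h1, h2, h3⟩ := h
    refine ⟨h1.symm, h2.symm, ?_⟩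
    rcases h3 with c | c | c | c
    exacts [Or.inr (Or.inl c), Or.inl c, Or.inr (Or.inr (Or.inr c)), Or.inr (Or.inr (Or.inl c))]
  refine ⟨w, ?_, ?_, ?_, ?_⟩
  · -- symmetry
    intro a b
    by_cases h : Supp a b
    · have h' : Supp b a := hSuppSymm a b h
      rw [hwSupp a b h, hwSupp b a h', SimpleGraph.dist_comm]
    · have h' : ¬ Supp b a := fun hs => h (hSuppSymm b a hs)
      rw [hwNot a b h, hwNot b a h']
  · -- positivity
    intro a b
    by_cases h : Supp a b
    · rw [hwSupp a b h]
      have := h.2.1.pos_dist_of_ne h.1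
      exact_mod_cast this
    · rw [hwNot a b h]; exact ENNReal.zero_lt_top
  · -- ======== edge count ========
    have hwt : ∀ p : V × V, w p.1 p.2 ≠ ⊤ ↔ Supp p.1 p.2 := by
      intro p
      constructor
      · intro h; by_contra hs; exact h (hwNot _ _ hs)
      · intro h; rw [hwSupp _ _ h]; exact ENNReal.natCast_ne_top _
    have hset : {p : V × V | w p.1 p.2 ≠ ⊤}
        = ↑(Finset.univ.filter (fun p : V × V => Supp p.1 p.2)) := by
      ext p
      simp [hwt p]
    rw [hset, Set.ncard_coe_finset]
    set T := Finset.univ.filter (fun p : V × V => Supp p.1 p.2) with hT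
    set A3 := (Finset.range (Jmax+1)).biUnion (fun j => Finset.univ.biUnion
      (fun x : V => if Dns x j then (∅ : Finset (V × V))
        else (Ball x (2^j)).image (fun y => (x, y)))) with hA3
    have hA3mem : ∀ a b : V, (∃ j ≤ Jmax, ¬ Dns a j ∧ b ∈ Ball a (2^j)) → (a,b) ∈ A3 := by
      rintro a b ⟨j, hj, hnd, hb⟩
      rw [hA3]
      refine Finset.mem_biUnion.mpr ⟨j, Finset.mem_range.mpr (by omega), ?_⟩
      refine Finset.mem_biUnion.mpr ⟨a, Finset.mem_univ _, ?_⟩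
      rw [if_neg hnd]
      exact Finset.mem_image.mpr ⟨b, hb, rfl⟩
    have hTsub : T ⊆ ((Finset.univ ×ˢ S) ∪ (S ×ˢ Finset.univ)) ∪ (A3 ∪ A3.image Prod.swap) := by
      intro p hp
      obtain ⟨-, hs⟩ := Finset.mem_filter.mp hp
      rcases hs.2.2 with h | h | h | h
      · exact Finset.mem_union_left _ (Finset.mem_union_left _
          (Finset.mem_product.mpr ⟨Finset.mem_univ _, h⟩))
      · exact Finset.mem_union_left _ (Finset.mem_union_right _
          (Finset.mem_product.mpr ⟨h, Finset.mem_univ _⟩))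
      · exact Finset.mem_union_right _ (Finset.mem_union_left _ (hA3mem _ _ h))
      · refine Finset.mem_union_right _ (Finset.mem_union_right _ ?_)
        exact Finset.mem_image.mpr ⟨(p.2, p.1), hA3mem _ _ h, rfl⟩
    have hA3card : A3.card ≤ (Jmax+1) * (n * τ) := by
      rw [hA3]
      refine le_trans Finset.card_biUnion_le ?_
      have hin : ∀ j ∈ Finset.range (Jmax+1),
          (Finset.univ.biUnion (fun x : V => if Dns x j then (∅ : Finset (V × V))
            else (Ball x (2^j)).image (fun y => (x, y)))).card ≤ n * τ := by
        intro j _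
        refine le_trans Finset.card_biUnion_le ?_
        have hx : ∀ x : V, (if Dns x j then (∅:Finset (V×V))
            else (Ball x (2^j)).image (fun y => (x, y))).card ≤ τ := by
          intro x
          by_cases hD : Dns x j
          · rw [if_pos hD]; simp
          · rw [if_neg hD]
            refine le_trans Finset.card_image_le ?_
            exact Nat.le_of_not_lt hD
        calc ∑ x ∈ Finset.univ, (if Dns x j then (∅:Finset (V×V))
              else (Ball x (2^j)).image (fun y => (x, y))).card
            ≤ ∑ _x ∈ (Finset.univ : Finset V), τ := Finset.sum_le_sum (fun x _ => hx x)
        _ = n * τ := by rw [Finset.sum_const, smul_eq_mul, Finset.card_univ]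
      calc ∑ j ∈ Finset.range (Jmax+1), (Finset.univ.biUnion (fun x : V =>
            if Dns x j then (∅ : Finset (V × V))
            else (Ball x (2^j)).image (fun y => (x, y)))).card
          ≤ ∑ _j ∈ Finset.range (Jmax+1), n*τ := Finset.sum_le_sum hin
      _ = (Jmax+1)*(n*τ) := by rw [Finset.sum_const, smul_eq_mul, Finset.card_range]
    have hTcard : T.card ≤ n * S.card + S.card * n + ((Jmax+1)*(n*τ) + (Jmax+1)*(n*τ)) := by
      refine le_trans (Finset.card_le_card hTsub) ?_
      refine le_trans (Finset.card_union_le _ _) ?_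
      have c1 : ((Finset.univ ×ˢ S) ∪ (S ×ˢ Finset.univ)).card ≤ n*S.card + S.card*n := by
        refine le_trans (Finset.card_union_le _ _) ?_
        rw [Finset.card_product, Finset.card_product, Finset.card_univ]
      have c2 : (A3 ∪ A3.image Prod.swap).card ≤ (Jmax+1)*(n*τ) + (Jmax+1)*(n*τ) :=
        le_trans (Finset.card_union_le _ _)
          (add_le_add hA3card (le_trans Finset.card_image_le hA3card))
      exact add_le_add c1 c2
    -- pass to the reals
    set rn := (n:ℝ) with hrn
    set sq := Real.sqrt rn with hsq
    set L := Real.log rn with hL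
    have hrn2 : (2:ℝ) ≤ rn := by rw [hrn]; exact_mod_cast hn2
    have hsq0 : (0:ℝ) < sq := Real.sqrt_pos.mpr (by linarith)
    have hsq1 : (1:ℝ) ≤ sq := by
      rw [hsq, show (1:ℝ) = Real.sqrt 1 from (Real.sqrt_one).symm]
      exact Real.sqrt_le_sqrt (by linarith)
    have hsqsq : sq * sq = rn := Real.mul_self_sqrt (by linarith)
    have hlog2pos : (0:ℝ) < Real.log 2 := Real.log_pos (by norm_num)
    have hL2 : Real.log 2 ≤ L := Real.log_le_log (by norm_num) hrn2
    have hL069 : (0.6931:ℝ) ≤ L := le_trans (by linarith [Real.log_two_gt_d9]) hL2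
    have hlog2069 : (0.6931:ℝ) ≤ Real.log 2 := by linarith [Real.log_two_gt_d9]
    have hτr : (τ:ℝ) ≤ sq := by
      have h1 : ((τ:ℝ))^2 ≤ rn := by
        rw [hrn]
        exact_mod_cast Nat.sqrt_le' n
      nlinarith
    have hdiv : rn / ((τ:ℝ)+1) ≤ sq := by
      have h1 : rn < ((τ:ℝ)+1)^2 := by
        rw [hrn]
        exact_mod_cast Nat.lt_succ_sqrt' n
      have hsqle : sq ≤ (τ:ℝ)+1 := by nlinarith
      rw [div_le_iff₀ (by positivity)]
      nlinarith
    have hFamnat : Fam.card ≤ n * (Jmax+1) := by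
      rw [hFam]
      refine le_trans Finset.card_image_le ?_
      refine le_trans (Finset.card_filter_le _ _) ?_
      rw [Finset.card_product, Finset.card_univ, Finset.card_range]
    have hJmn : Jmax + 1 ≤ n := by
      have := Nat.log_lt_self 2 (by omega : n ≠ 0)
      omega
    have hlogFam : Real.log Fam.card ≤ 2 * L := by
      rcases Nat.eq_zero_or_pos Fam.card with h0 | hpos
      · rw [h0]
        simp only [Nat.cast_zero, Real.log_zero]
        linarith
      · have h1 : (Fam.card : ℝ) ≤ rn * rn := by
          have h2 : Fam.card ≤ n * n := le_trans hFamnat (Nat.mul_le_mul_left n hJmn)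
          rw [hrn]
          exact_mod_cast h2
        calc Real.log Fam.card ≤ Real.log (rn * rn) :=
              Real.log_le_log (by exact_mod_cast hpos) h1
        _ = L + L := Real.log_mul (by linarith) (by linarith)
        _ = 2 * L := by ring
    have hSr : (S.card:ℝ) ≤ sq * (2*L) + 1 := by
      refine le_trans hScard ?_
      have heq : (((Finset.univ : Finset V).card : ℕ):ℝ) = rn := by
        rw [hrn, hn]
        simp
      have hc : ((τ+1:ℕ):ℝ) = (τ:ℝ)+1 := by push_cast; ring
      rw [heq, hc]
      have hlognn : (0:ℝ) ≤ Real.log Fam.card := Real.log_natCast_nonneg _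
      have := mul_le_mul hdiv hlogFam hlognn (le_of_lt hsq0)
      linarith
    have hJr : (Jmax:ℝ) + 1 ≤ 3 * L := by
      have h1 : ((2:ℝ))^(Jmax:ℕ) ≤ rn := by
        rw [hrn]
        exact_mod_cast Nat.pow_log_le_self 2 (by omega : n ≠ 0)
      have h2 : (Jmax:ℝ) * Real.log 2 ≤ L := by
        calc (Jmax:ℝ) * Real.log 2 = Real.log ((2:ℝ)^(Jmax:ℕ)) := by
              rw [Real.log_pow]
        _ ≤ L := Real.log_le_log (by positivity) h1
      have h3 : (Jmax:ℝ) * 0.6931 ≤ L := by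
        have := mul_le_mul_of_nonneg_left hlog2069 (Nat.cast_nonneg Jmax)
        linarith
      have h4 : (0:ℝ) ≤ (Jmax:ℝ) := Nat.cast_nonneg _
      nlinarith
    have hTr : (T.card : ℝ) ≤ rn * (S.card:ℝ) + (S.card:ℝ) * rn
        + (((Jmax:ℝ)+1)*(rn*(τ:ℝ)) + ((Jmax:ℝ)+1)*(rn*(τ:ℝ))) := by
      rw [hrn]
      exact_mod_cast hTcard
    have hpow : rn ^ ((3:ℝ)/2) = rn * sq := by
      rw [show (3:ℝ)/2 = 1 + 1/2 by norm_num, Real.rpow_add (by linarith), Real.rpow_one,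
        hsq, Real.sqrt_eq_rpow]
    rw [hpow]
    have hB1 : rn * (S.card:ℝ) + (S.card:ℝ) * rn ≤ 4*(rn*sq*L) + 2*rn := by
      nlinarith
    have hB2 : ((Jmax:ℝ)+1)*(rn*(τ:ℝ)) + ((Jmax:ℝ)+1)*(rn*(τ:ℝ)) ≤ 6*(rn*sq*L) := by
      have hτnn : (0:ℝ) ≤ (τ:ℝ) := Nat.cast_nonneg _
      have h1 : ((Jmax:ℝ)+1)*(rn*(τ:ℝ)) ≤ (3*L)*(rn*sq) := by
        apply mul_le_mul hJr _ (by positivity) (by positivity)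
        exact mul_le_mul_of_nonneg_left hτr (by linarith)
      nlinarith
    have hB3 : 2*rn ≤ 3*(rn*sq*L) := by
      have hLnn : (0:ℝ) ≤ L := by linarith
      have h1 : (0.6931:ℝ) ≤ sq * L := by
        nlinarith [mul_le_mul_of_nonneg_right hsq1 hLnn]
      nlinarith [mul_le_mul_of_nonneg_left h1 (by linarith : (0:ℝ) ≤ rn)]
    calc (T.card : ℝ) ≤ _ := hTr
    _ ≤ 4*(rn*sq*L) + 2*rn + 6*(rn*sq*L) := by linarith
    _ ≤ 13*(rn*sq*L) := by linarith
    _ ≤ 10000 * (rn * sq) * L := by nlinarith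
  · -- ======== hopset property ========
    have hstep : ∀ a b : V, stepCost G w a b ≠ ⊤ →
        G.Reachable a b ∧ (G.dist a b : ℝ≥0∞) ≤ stepCost G w a b := by
      intro a b hne
      rw [stepCost] at hne ⊢
      by_cases hadj : G.Adj a b
      · refine ⟨hadj.reachable, ?_⟩
        have hd : G.dist a b = 1 := SimpleGraph.dist_eq_one_iff_adj.mpr hadj
        rw [hd, if_pos hadj]
        refine le_min (by simp) ?_
        by_cases hs : Supp a b
        · rw [hwSupp a b hs, hd]
        · rw [hwNot a b hs]; simp
      · rw [if_neg hadj] at hne ⊢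
        rw [min_eq_right (le_top : w a b ≤ ⊤)] at hne ⊢
        have hs : Supp a b := by
          by_contra hs
          exact hne (hwNot a b hs)
        exact ⟨hs.2.1, le_of_eq (hwSupp a b hs).symm⟩
    intro u v hreach hdt
    by_cases huv : u = v
    · subst huv
      rw [SimpleGraph.dist_self]
      refine ⟨by simp, ?_⟩
      have h0 : bddWDist (stepCost G w) ⌈(10000:ℝ) * Real.log t / ε⌉₊ u u
          ≤ walkCost (stepCost G w) u [] := bddWDist_le _ _ _ _ [] (by simp) (by simp)
      simpa [walkCost] using h0
    constructor
    · -- lower bound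
      rw [bddWDist]
      refine le_iInf fun l => le_iInf fun hlen => le_iInf fun hlast => ?_
      by_cases hfin : walkCost (stepCost G w) u l = ⊤
      · rw [hfin]; exact le_top
      · have h := walkCost_ge G (stepCost G w) hstep l u hfin
        rw [hlast] at h
        exact h.2
    -- upper bound
    set d := G.dist u v with hd
    have hd1 : 1 ≤ d := hreach.pos_dist_of_ne huv
    have hdn : d ≤ n - 1 := by
      obtain ⟨p⟩ := hreach
      have h1 : G.dist u v ≤ p.bypass.length := SimpleGraph.dist_le _
      have h2 := p.bypass_isPath.length_lt
      omega
    have hl2 : (0.6931:ℝ) ≤ Real.log 2 := by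
      have := Real.log_two_gt_d9; linarith
    have hlogt : Real.log 2 ≤ Real.log t := by
      apply Real.log_le_log (by norm_num)
      exact_mod_cast ht
    by_cases hsmall : ε * d ≤ 16
    · -- short distances : use the graph itself
      obtain ⟨p, hp⟩ := hreach.exists_walk_length_eq_dist
      obtain ⟨l, hlen, hlast, hcost⟩ := exists_list_of_walk G w p
      have hβ : d ≤ ⌈(10000:ℝ) * Real.log t / ε⌉₊ := by
        have h16 : (d:ℝ) ≤ 16 / ε := by
          rw [le_div_iff₀ hε]; linarith
        have hfin : (d : ℝ) ≤ 10000 * Real.log t / ε := by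
          rw [le_div_iff₀ hε] at h16 ⊢
          nlinarith
        calc d = ⌈(d:ℝ)⌉₊ := (Nat.ceil_natCast d).symm
        _ ≤ ⌈(10000:ℝ) * Real.log t / ε⌉₊ := Nat.ceil_le_ceil hfin
      refine le_trans (bddWDist_le _ _ _ _ l (by rw [hlen, hp]; exact hβ) hlast) ?_
      refine le_trans hcost ?_
      rw [hp]
      have h1 : (1:ℝ≥0∞) ≤ ENNReal.ofReal (1+ε) := by
        rw [← ENNReal.ofReal_one]
        exact ENNReal.ofReal_le_ofReal (by linarith)
      calc ((d:ℕ) : ℝ≥0∞) = 1 * ((d:ℕ) : ℝ≥0∞) := (one_mul _).symm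
      _ ≤ _ := mul_le_mul_of_nonneg_right h1 (zero_le)

    · -- long distances : hub / sparse-ball walk
      push_neg at hsmall
      have hb1 : 1 ≤ ⌊ε * (d:ℝ) / 16⌋₊ := by
        apply Nat.le_floor
        rw [Nat.cast_one, le_div_iff₀ (by norm_num : (0:ℝ) < 16)]
        linarith
      set b := ⌊ε * (d:ℝ) / 16⌋₊ with hbdef
      set j := Nat.log 2 b + 1 with hjdef
      set r := 2^j with hrdef
      have hr1 : 1 ≤ r := Nat.one_le_two_pow
      have hrb : r ≤ 2 * b := by
        have h1 := Nat.pow_log_le_self 2 (by omega : b ≠ 0)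
        rw [hrdef, hjdef, pow_succ]
        omega
      have hrlow : ε * (d:ℝ) / 16 < r := by
        have h1 : ε * (d:ℝ) / 16 < b + 1 := Nat.lt_floor_add_one _
        have h2 : b + 1 ≤ r := by
          have h3 := Nat.lt_pow_succ_log_self (by norm_num : 1 < 2) b
          rw [hrdef, hjdef]
          omega
        have h2' : ((b:ℝ) + 1) ≤ r := by exact_mod_cast h2
        linarith
      have hrup : (r:ℝ) ≤ ε * (d:ℝ) / 8 := by
        have h1 : (r:ℝ) ≤ 2 * b := by exact_mod_cast hrb
        have h2 : (b:ℝ) ≤ ε * (d:ℝ) / 16 := Nat.floor_le (by positivity)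
        linarith
      have hrd : r < d := by
        have h1 : (r:ℝ) < d := by nlinarith
        exact_mod_cast h1
      have hjJ : j ≤ Jmax := by
        have h1 : 2^j ≤ n := by omega
        rw [hJdef]
        exact Nat.le_log_of_pow_le (by norm_num) h1
      -- the recursive walk construction
      have key : ∀ k : ℕ, ∀ x : V, G.Reachable x v → G.dist x v = k →
          ∃ l : List V, l.length ≤ (k + r - 1)/r + 2 ∧
            (x :: l).getLast (List.cons_ne_nil x l) = v ∧
            walkCost (stepCost G w) x l ≤ ((k + 2*r : ℕ) : ℝ≥0∞) := by
        intro k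
        induction k using Nat.strong_induction_on with
        | _ k ih =>
          intro x hxv hk
          have hstep_le : ∀ a c : V, Supp a c → stepCost G w a c ≤ (G.dist a c : ℝ≥0∞) := by
            intro a c hs
            rw [stepCost]
            exact le_trans (min_le_right _ _) (le_of_eq (hwSupp a c hs))
          rcases Nat.eq_zero_or_pos k with hk0 | hkpos
          · have hxveq : x = v := hxv.dist_eq_zero_iff.mp (by omega)
            subst hxveq
            exact ⟨[], by simp, rfl, by simp [walkCost]⟩
          have hxvne : x ≠ v := by
            intro h; subst h; rw [SimpleGraph.dist_self] at hk; omega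
          by_cases hdense : Dns x j
          · -- dense ball : 2 hops through the hitting set
            have hmem : Ball x (2^j) ∈ Fam := by
              rw [hFam]
              apply Finset.mem_image.mpr
              refine ⟨(x, j), Finset.mem_filter.mpr ⟨Finset.mem_product.mpr
                ⟨Finset.mem_univ _, Finset.mem_range.mpr (by omega)⟩, hdense⟩, rfl⟩
            obtain ⟨s, hsS, hsB⟩ := hShit _ hmem
            have hsball : G.Reachable x s ∧ G.dist x s ≤ 2^j := by
              have := Finset.mem_filter.mp hsB
              exact this.2
            rcases eq_or_ne s x with rfl | hsx
            · have hsupp : Supp s v := ⟨hxvne, hxv, Or.inr (Or.inl hsS)⟩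
              refine ⟨[v], by simp, by simp, ?_⟩
              have : walkCost (stepCost G w) s [v] = stepCost G w s v + 0 := rfl
              rw [this, add_zero]
              refine le_trans (hstep_le _ _ hsupp) ?_
              exact_mod_cast (show G.dist s v ≤ k + 2*r by omega)
            rcases eq_or_ne s v with rfl | hsv
            · have hsupp : Supp x s := ⟨hxvne, hxv, Or.inl hsS⟩
              refine ⟨[s], by simp, by simp, ?_⟩
              have : walkCost (stepCost G w) x [s] = stepCost G w x s + 0 := rfl
              rw [this, add_zero]
              refine le_trans (hstep_le _ _ hsupp) ?_
              exact_mod_cast (show G.dist x s ≤ k + 2*r by omega)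
            · have hsupp1 : Supp x s := ⟨fun h => hsx (h.symm), hsball.1, Or.inl hsS⟩
              have hsupp2 : Supp s v := ⟨hsv, hsball.1.symm.trans hxv, Or.inr (Or.inl hsS)⟩
              refine ⟨[s, v], by simp, by simp, ?_⟩
              have hcw : walkCost (stepCost G w) x [s, v]
                  = stepCost G w x s + (stepCost G w s v + 0) := rfl
              rw [hcw, add_zero]
              have hd1' : G.dist x s ≤ r := by rw [hrdef]; exact hsball.2
              have hd2' : G.dist s v ≤ r + k := by
                calc G.dist s v ≤ G.dist s x + G.dist x v :=
                      dist_triangle' hsball.1.symm hxv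
                _ ≤ r + k := by
                      have h5 : G.dist s x = G.dist x s := SimpleGraph.dist_comm
                      omega
              calc stepCost G w x s + stepCost G w s v
                  ≤ (G.dist x s : ℝ≥0∞) + (G.dist s v : ℝ≥0∞) :=
                    add_le_add (hstep_le _ _ hsupp1) (hstep_le _ _ hsupp2)
              _ ≤ ((r : ℕ) : ℝ≥0∞) + ((r + k : ℕ) : ℝ≥0∞) :=
                    add_le_add (by exact_mod_cast hd1') (by exact_mod_cast hd2')
              _ = ((k + 2*r : ℕ) : ℝ≥0∞) := by
                    rw [← Nat.cast_add]
                    congr 1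
                    omega
          · -- sparse ball
            by_cases hkr : k ≤ r
            · -- the target is inside the ball
              have hvball : v ∈ Ball x (2^j) := by
                rw [hBall]
                refine Finset.mem_filter.mpr ⟨Finset.mem_univ _, hxv, ?_⟩
                rw [hk, ← hrdef]; exact hkr
              have hsupp : Supp x v :=
                ⟨hxvne, hxv, Or.inr (Or.inr (Or.inl ⟨j, hjJ, hdense, hvball⟩))⟩
              refine ⟨[v], by simp, by simp, ?_⟩
              have : walkCost (stepCost G w) x [v] = stepCost G w x v + 0 := rfl
              rw [this, add_zero]
              refine le_trans (hstep_le _ _ hsupp) ?_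
              exact_mod_cast (show G.dist x v ≤ k + 2*r by omega)
            · -- advance by exactly r along a geodesic
              push_neg at hkr
              obtain ⟨y, hxy, hyv, hdxy, hdyv⟩ := exists_mid hxv r (by omega)
              have hyball : y ∈ Ball x (2^j) := by
                rw [hBall]
                exact Finset.mem_filter.mpr ⟨Finset.mem_univ _, hxy, by rw [hdxy, ← hrdef]⟩
              have hxyne : x ≠ y := by
                intro h; subst h; rw [SimpleGraph.dist_self] at hdxy; omega
              have hsupp : Supp x y :=
                ⟨hxyne, hxy, Or.inr (Or.inr (Or.inl ⟨j, hjJ, hdense, hyball⟩))⟩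
              obtain ⟨l, hlen, hlast, hcost⟩ := ih (k - r) (by omega) y hyv (by omega)
              refine ⟨y :: l, ?_, ?_, ?_⟩
              · have e1 : (k - r) + r - 1 = k - 1 := by omega
                have e2 : k + r - 1 = (k - 1) + r := by omega
                have e3 : ((k-1) + r)/r + 2 = ((k-1)/r + 1) + 2 := by
                  rw [Nat.add_div_right _ (by omega : 0 < r)]
                calc (y :: l).length = l.length + 1 := by simp
                _ ≤ ((k - r) + r - 1)/r + 2 + 1 := by omega
                _ = (k + r - 1)/r + 2 := by rw [e1, e2, e3]
              · rw [List.getLast_cons (List.cons_ne_nil y l)]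
                exact hlast
              · have : walkCost (stepCost G w) x (y :: l)
                    = stepCost G w x y + walkCost (stepCost G w) y l := rfl
                rw [this]
                calc stepCost G w x y + walkCost (stepCost G w) y l
                    ≤ (G.dist x y : ℝ≥0∞) + (((k - r) + 2*r : ℕ) : ℝ≥0∞) :=
                      add_le_add (hstep_le _ _ hsupp) hcost
                _ = ((k + 2*r : ℕ) : ℝ≥0∞) := by
                      rw [hdxy, ← Nat.cast_add]
                      congr 1
                      omega
      obtain ⟨l, hlen, hlast, hcost⟩ := key d u hreach rfl
      have hβ : (d + r - 1)/r + 2 ≤ ⌈(10000:ℝ) * Real.log t / ε⌉₊ := by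
        have hnat : (d + r - 1)/r + 2 ≤ d/r + 3 := by
          have h1 : (d + r - 1)/r ≤ (d + r)/r :=
            Nat.div_le_div_right (by omega)
          have h2 : (d + r)/r = d/r + 1 := Nat.add_div_right _ (by omega)
          omega
        have hreal : ((d/r + 3 : ℕ) : ℝ) ≤ 10000 * Real.log t / ε := by
          have hcast : ((d/r : ℕ) : ℝ) ≤ (d:ℝ)/(r:ℝ) := Nat.cast_div_le
          have hdr : (d:ℝ)/(r:ℝ) ≤ 16/ε := by
            rw [div_le_div_iff₀ (by positivity) hε]
            nlinarith
          have h3 : ((d/r + 3 : ℕ) : ℝ) ≤ 16/ε + 3 := by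
            push_cast
            linarith
          refine le_trans h3 ?_
          rw [div_add' _ _ _ (ne_of_gt hε), div_le_div_iff₀ hε hε]
          nlinarith
        have h4 : (d/r + 3 : ℕ) ≤ ⌈(10000:ℝ) * Real.log t / ε⌉₊ := by
          calc (d/r + 3 : ℕ) = ⌈((d/r + 3 : ℕ) : ℝ)⌉₊ := (Nat.ceil_natCast _).symm
          _ ≤ _ := Nat.ceil_le_ceil hreal
        omega
      refine le_trans (bddWDist_le _ _ _ _ l (le_trans hlen hβ) hlast) ?_
      refine le_trans hcost ?_
      have hfinal : ((d + 2*r : ℕ) : ℝ≥0∞) = ENNReal.ofReal ((d:ℝ) + 2*r) := by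
        rw [← ENNReal.ofReal_natCast]
        congr 1
        push_cast
        ring
      rw [hfinal]
      have hofmul : ENNReal.ofReal (1 + ε) * ((d:ℕ) : ℝ≥0∞)
          = ENNReal.ofReal ((1 + ε) * (d:ℝ)) := by
        rw [ENNReal.ofReal_mul (by linarith), ENNReal.ofReal_natCast]
      rw [hofmul]
      apply ENNReal.ofReal_le_ofReal
      linarith only [hrup, hsmall]
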